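/- Let g_T: Z^T → Z ∪ {+∞} be the minimum branching weight function of a digraph D[T] with nonnegative weights, and let q ∈ Z^T. If argmin of g_T[+q] (where g_T[+q](η) = g_T(η) + Σ_v q(v)η(v)) is nonempty, then q(v) ≥ 0 for every v ∈ T; moreover q(v) = 0 whenever some minimizer η* of g_T[+q] has η*(v) ≥ 2. -/

import Mathlib

open scoped Classical
open Finset

variable {V : Type*} [Fintype V] [DecidableEq V]

/-- A closed directed walk (cycle) using arcs of `B`. -/
def HasCycle (B : Finset (V × V)) : Prop :=
  ∃ (n : ℕ) (f : Fin (n + 1) → V), ∀ i : Fin (n + 1), (f i, f (i + 1)) ∈ B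

/-- `B` is a branching in the digraph with arc set `A`. -/
def IsBranching (A B : Finset (V × V)) : Prop :=
  B ⊆ A ∧ (∀ v : V, (B.filter (fun a => a.2 = v)).card ≤ 1) ∧ ¬ HasCycle B

/-- `R(B)`: the set of vertices with no arc of `B` entering them. -/
def rootSet (B : Finset (V × V)) : Finset V :=
  Finset.univ.filter (fun v => ∀ a ∈ B, a.2 ≠ v)

/-- Reachability via directed paths using arcs of `A`. -/
def Reaches (A : Finset (V × V)) (u v : V) : Prop :=
  Relation.ReflTransGen (fun x y => (x, y) ∈ A) u v

/-- A source component: a strongly connected component with no entering arc. -/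
def IsSourceComponent (A : Finset (V × V)) (K : Set V) : Prop :=
  (∃ v : V, K = {u : V | Reaches A u v ∧ Reaches A v u}) ∧
    ∀ a ∈ A, a.2 ∈ K → a.1 ∈ K


/-- Characteristic vector of a single vertex. -/
def chi (u : V) : V → ℤ := fun v => if v = u then 1 else 0

/-- `gFun A w η`: the minimum weight of a branching `B` in `(V, A)` with
`R(B) = supp⁺(η)`, for `η ∈ ℤ₊^V`; `+∞` (i.e. `⊤`) otherwise. -/
noncomputable def gFun (A : Finset (V × V)) (w : V × V → ℤ) (η : V → ℤ) : WithTop ℤ :=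
  if ∀ v : V, 0 ≤ η v then
    (A.powerset.filter (fun B => IsBranching A B ∧
        rootSet B = Finset.univ.filter (fun v => 0 < η v))).inf
      (fun B => ((∑ a ∈ B, w a : ℤ) : WithTop ℤ))
  else ⊤

/-- The shifted function `g[+q](η) = g(η) + q·η`. -/
noncomputable def gShift (A : Finset (V × V)) (w : V × V → ℤ) (q : V → ℤ) (η : V → ℤ) :
    WithTop ℤ :=
  gFun A w η + ((∑ v : V, q v * η v : ℤ) : WithTop ℤ)

lemma hasCycle_mono {B B' : Finset (V × V)} (h : B' ⊆ B) (hc : HasCycle B') : HasCycle B := by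
  obtain ⟨n, f, hf⟩ := hc
  exact ⟨n, f, fun i => h (hf i)⟩

lemma isBranching_filter (A B : Finset (V × V)) (v : V) (h : IsBranching A B) :
    IsBranching A (B.filter (fun a => a.2 ≠ v)) := by
  obtain ⟨h1, h2, h3⟩ := h
  refine ⟨(Finset.filter_subset _ _).trans h1, fun u => le_trans (Finset.card_le_card ?_) (h2 u),
    fun hc => h3 (hasCycle_mono (Finset.filter_subset _ _) hc)⟩
  intro a ha
  simp only [Finset.mem_filter] at ha ⊢
  exact ⟨ha.1.1, ha.2⟩

lemma rootSet_filter (B : Finset (V × V)) (v : V) :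
    rootSet (B.filter (fun a => a.2 ≠ v)) = insert v (rootSet B) := by
  ext u
  simp only [rootSet, Finset.mem_insert, Finset.mem_filter, Finset.mem_univ, true_and]
  constructor
  · intro h
    by_cases huv : u = v
    · exact Or.inl huv
    · exact Or.inr fun a ha hau => (h a ⟨ha, by rw [hau]; exact huv⟩) hau
  · rintro (rfl | h) a ⟨ha, hav⟩
    · exact hav
    · exact h a ha

lemma gFun_add_chi_le (A : Finset (V × V)) (w : V × V → ℤ) (hw : ∀ a, 0 ≤ w a)
    (η : V → ℤ) (v : V) :
    gFun A w (fun u => η u + chi v u) ≤ gFun A w η := by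
  unfold gFun
  by_cases hη : ∀ u, 0 ≤ η u
  · have hη' : ∀ u, 0 ≤ η u + chi v u := by
      intro u; have := hη u; unfold chi; split <;> omega
    rw [if_pos hη, if_pos hη']
    apply Finset.le_inf
    intro B hB
    simp only [Finset.mem_filter, Finset.mem_powerset] at hB
    obtain ⟨hBA, hbr, hroot⟩ := hB
    refine Finset.inf_le_of_le (b := B.filter (fun a => a.2 ≠ v)) ?_ ?_
    · simp only [Finset.mem_filter, Finset.mem_powerset]
      refine ⟨(Finset.filter_subset _ _).trans hBA, isBranching_filter A B v hbr, ?_⟩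
      rw [rootSet_filter, hroot]
      ext u
      simp only [Finset.mem_insert, Finset.mem_filter, Finset.mem_univ, true_and, chi]
      by_cases huv : u = v
      · subst huv; have := hη u; erw [Finset.mem_filter]; simp; omega
      · erw [Finset.mem_filter]; simp [huv]
    · have : (∑ a ∈ B.filter (fun a => a.2 ≠ v), w a) ≤ ∑ a ∈ B, w a :=
        Finset.sum_le_sum_of_subset_of_nonneg (Finset.filter_subset _ _)
          (fun a _ _ => hw a)
      exact_mod_cast this
  · rw [if_neg hη]; exact le_top

lemma gFun_sub_chi_eq (A : Finset (V × V)) (w : V × V → ℤ)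
    (η : V → ℤ) (v : V) (hv : 2 ≤ η v) :
    gFun A w (fun u => η u - chi v u) = gFun A w η := by
  unfold gFun
  have hiff : (∀ u, 0 ≤ η u - chi v u) ↔ (∀ u, 0 ≤ η u) := by
    constructor <;> intro h u <;> have := h u <;> unfold chi at * <;>
      by_cases huv : u = v <;> simp [huv] at * <;> omega
  by_cases hη : ∀ u, 0 ≤ η u
  · rw [if_pos hη, if_pos (hiff.mpr hη)]
    have : (Finset.univ.filter (fun u => 0 < η u - chi v u)) =
        (Finset.univ.filter (fun u => 0 < η u)) := by
      ext u
      simp only [Finset.mem_filter, Finset.mem_univ, true_and, chi]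
      by_cases huv : u = v
      · subst huv; simp; omega
      · simp [huv]
    rw [this]
  · rw [if_neg hη, if_neg (fun h => hη (hiff.mp h))]

lemma sum_chi (q η : V → ℤ) (v : V) :
    (∑ u : V, q u * (η u + chi v u)) = (∑ u : V, q u * η u) + q v := by
  simp [mul_add, Finset.sum_add_distrib, chi, mul_ite, mul_one, mul_zero,
    Finset.sum_ite_eq']

lemma sum_chi_sub (q η : V → ℤ) (v : V) :
    (∑ u : V, q u * (η u - chi v u)) = (∑ u : V, q u * η u) - q v := by
  simp [mul_sub, Finset.sum_sub_distrib, chi, mul_ite, mul_one, mul_zero,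
    Finset.sum_ite_eq']

lemma key_nonneg (A : Finset (V × V)) (w : V × V → ℤ) (hw : ∀ a, 0 ≤ w a) (q : V → ℤ)
    {η : V → ℤ} (hne : gShift A w q η ≠ ⊤)
    (hm : ∀ ζ : V → ℤ, gShift A w q η ≤ gShift A w q ζ) (v : V) : 0 ≤ q v := by
  have hg : gFun A w η ≠ ⊤ := by
    intro h; exact hne (by simp [gShift, h])
  obtain ⟨m, hmq⟩ := WithTop.ne_top_iff_exists.mp hg
  set s : ℤ := ∑ u : V, q u * η u with hs
  have h1 := hm (fun u => η u + chi v u)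
  have h2 : gFun A w (fun u => η u + chi v u) ≤ (m : WithTop ℤ) := by
    rw [hmq]; exact gFun_add_chi_le A w hw η v
  obtain ⟨k, hk, hkm⟩ := WithTop.le_coe_iff.mp h2
  rw [gShift, gShift, ← hmq, hk, sum_chi, ← hs] at h1
  rw [← WithTop.coe_add, ← WithTop.coe_add, WithTop.coe_le_coe] at h1
  linarith

lemma key_nonpos (A : Finset (V × V)) (w : V × V → ℤ) (q : V → ℤ)
    {η : V → ℤ} (hne : gShift A w q η ≠ ⊤)
    (hm : ∀ ζ : V → ℤ, gShift A w q η ≤ gShift A w q ζ) {v : V} (hv : 2 ≤ η v) :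
    q v ≤ 0 := by
  have hg : gFun A w η ≠ ⊤ := by
    intro h; exact hne (by simp [gShift, h])
  obtain ⟨m, hmq⟩ := WithTop.ne_top_iff_exists.mp hg
  set s : ℤ := ∑ u : V, q u * η u with hs
  have h1 := hm (fun u => η u - chi v u)
  rw [gShift, gShift, gFun_sub_chi_eq A w η v hv, ← hmq, sum_chi_sub, ← hs] at h1
  rw [← WithTop.coe_add, ← WithTop.coe_add, WithTop.coe_le_coe] at h1
  linarith

/-- If `argmin g[+q]` is nonempty then `q ≥ 0`, and `q(v) = 0` whenever some
minimizer `η*` has `η*(v) ≥ 2`. -/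
theorem gShift_argmin_nonempty_imp (A : Finset (V × V)) (w : V × V → ℤ)
    (hw : ∀ a, 0 ≤ w a) (q : V → ℤ)
    (hmin : ∃ η : V → ℤ, gShift A w q η ≠ ⊤ ∧ ∀ ζ : V → ℤ, gShift A w q η ≤ gShift A w q ζ) :
    (∀ v : V, 0 ≤ q v) ∧
      ∀ (η : V → ℤ) (v : V),
        (gShift A w q η ≠ ⊤ ∧ ∀ ζ : V → ℤ, gShift A w q η ≤ gShift A w q ζ) →
        2 ≤ η v → q v = 0 := by
  obtain ⟨η₀, h0ne, h0m⟩ := hmin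
  have h1 : ∀ v : V, 0 ≤ q v := fun v => key_nonneg A w hw q h0ne h0m v
  exact ⟨h1, fun η v ⟨hne, hm⟩ hv => le_antisymm (key_nonpos A w q hne hm hv) (h1 v)⟩
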